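/- For a channel Λ = ∏_P Γ_P^{λ_P} (product over a finite set of distinct nontrivial n-qubit Paulis), writing Λ(ρ) = ∑_{P,Q} c_{P,Q} PρQ in the Pauli basis, the coefficient c_{I,I} satisfies c_{I,I} ≥ ∏_P (1 - ω_P) = ∏_P (1 + e^{-2λ_P})/2, and hence c_{I,I} ≥ exp(-∑_P λ_P). -/

import Mathlib

open Matrix
noncomputable section

/-- The single-qubit Pauli matrices `I, X, Y, Z`. -/
def pauli : Fin 4 → Matrix (Fin 2) (Fin 2) ℂ
  | 0 => 1
  | 1 => !![0, 1; 1, 0]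
  | 2 => !![0, -Complex.I; Complex.I, 0]
  | 3 => !![1, 0; 0, -1]

def sym : Fin 4 → Fin 4 → ZMod 2 := fun a b => if a ≠ 0 ∧ b ≠ 0 ∧ a ≠ b then 1 else 0

def xor4 : Fin 4 → Fin 4 → Fin 4 := fun a b =>
  ⟨a.val ^^^ b.val, by have := a.2; have := b.2; interval_cases h1 : a.val <;> interval_cases h2 : b.val <;> decide⟩

def sg : ZMod 2 → ℝ := fun x => if x = 0 then 1 else -1

lemma sym_comm (a b : Fin 4) : sym a b = sym b a := by revert a b; decide
lemma sym_xor (a b c : Fin 4) : sym a (xor4 b c) = sym a b + sym a c := by revert a b c; decide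
lemma xor4_invol (a b : Fin 4) : xor4 a (xor4 a b) = b := by revert a b; decide
lemma zmod2_cases (x : ZMod 2) : x = 0 ∨ x = 1 := by revert x; decide

lemma sg_add (x y : ZMod 2) : sg (x + y) = sg x * sg y := by
  rcases zmod2_cases x with h | h <;> rcases zmod2_cases y with h' | h' <;>
    subst h <;> subst h' <;> simp [sg, show (1+1:ZMod 2)=0 from rfl]

lemma sg_one : sg 1 = -1 := by norm_num [sg]

lemma pauli_mul_self (a : Fin 4) : pauli a * pauli a = 1 := by
  fin_cases a <;>
    · ext i j
      fin_cases i <;> fin_cases j <;>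
        simp [pauli, Matrix.mul_apply, Fin.sum_univ_two, Matrix.one_apply, Complex.ext_iff]

lemma pauli_conj (a b : Fin 4) :
    pauli b * pauli a * pauli b = ((sg (sym a b) : ℝ) : ℂ) • pauli a := by
  fin_cases a <;> fin_cases b <;>
    · ext i j
      fin_cases i <;> fin_cases j <;>
        simp [pauli, sym, sg, Matrix.mul_apply, Fin.sum_univ_two, Matrix.one_apply,
          Complex.ext_iff] <;> ring_nf <;> simp [Complex.I_sq] <;> ring

lemma sg_zero : sg 0 = 1 := by norm_num [sg]

lemma sg_sum {κ : Type*} (t : Finset κ) (e : κ → ZMod 2) :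
    ∏ k ∈ t, sg (e k) = sg (∑ k ∈ t, e k) := by
  induction t using Finset.cons_induction with
  | empty => simp [sg_zero]
  | cons a t ha ih => rw [Finset.prod_cons, Finset.sum_cons, ih, sg_add]

def tensorM {n : ℕ} (m : Fin n → Matrix (Fin 2) (Fin 2) ℂ) :
    Matrix (Fin n → Fin 2) (Fin n → Fin 2) ℂ :=
  Matrix.of fun i j => ∏ k, m k (i k) (j k)

/-- The `n`-qubit Pauli operator labelled by `f : Fin n → Fin 4`. -/
def PauliOp {n : ℕ} (f : Fin n → Fin 4) : Matrix (Fin n → Fin 2) (Fin n → Fin 2) ℂ :=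
  Matrix.of fun i j => ∏ k, pauli (f k) (i k) (j k)

lemma PauliOp_eq {n : ℕ} (f : Fin n → Fin 4) : PauliOp f = tensorM fun k => pauli (f k) := rfl

lemma tensorM_mul {n : ℕ} (m m' : Fin n → Matrix (Fin 2) (Fin 2) ℂ) :
    tensorM m * tensorM m' = tensorM fun k => m k * m' k := by
  ext i j
  simp only [tensorM, Matrix.of_apply, Matrix.mul_apply]
  rw [Finset.prod_univ_sum, Fintype.piFinset_univ]
  exact Finset.sum_congr rfl fun x _ => Finset.prod_mul_distrib.symm

lemma tensorM_smul {n : ℕ} (c : Fin n → ℂ) (m : Fin n → Matrix (Fin 2) (Fin 2) ℂ) :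
    (tensorM fun k => c k • m k) = (∏ k, c k) • tensorM m := by
  ext i j
  simp [tensorM, Finset.prod_mul_distrib]

lemma tensorM_one {n : ℕ} : (tensorM fun _ : Fin n => (1 : Matrix (Fin 2) (Fin 2) ℂ)) = 1 := by
  ext i j
  simp only [tensorM, Matrix.of_apply, Matrix.one_apply, Finset.prod_boole]
  simp [funext_iff]

def chi {n : ℕ} (f g : Fin n → Fin 4) : ZMod 2 := ∑ k, sym (f k) (g k)

lemma PauliOp_mul_self {n : ℕ} (f : Fin n → Fin 4) : PauliOp f * PauliOp f = 1 := by
  rw [PauliOp_eq, tensorM_mul]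
  simp [pauli_mul_self, tensorM_one]

lemma PauliOp_conj {n : ℕ} (f g : Fin n → Fin 4) :
    PauliOp g * PauliOp f * PauliOp g = ((sg (chi f g) : ℝ) : ℂ) • PauliOp f := by
  rw [PauliOp_eq f, PauliOp_eq g, tensorM_mul, tensorM_mul]
  have : (fun k => pauli (g k) * pauli (f k) * pauli (g k))
      = fun k => (((sg (sym (f k) (g k)) : ℝ) : ℂ)) • pauli (f k) := by
    funext k; exact pauli_conj (f k) (g k)
  rw [this, tensorM_smul]
  congr 1
  rw [← Complex.ofReal_prod, sg_sum]
  rfl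

lemma PauliOp_trace_self {n : ℕ} (f : Fin n → Fin 4) :
    (PauliOp f * PauliOp f).trace = (2 ^ n : ℂ) := by
  rw [PauliOp_mul_self, Matrix.trace_one]
  simp [Fintype.card_fun]

/-- The Pauli noise channel `Γ_P^λ` as a linear endomorphism,
`Γ_P^λ(ρ) = (1-ω)ρ + ω PρP`, `ω = (1-e^{-2λ})/2`. -/
def GammaL {n : ℕ} (f : Fin n → Fin 4) (lam : ℝ) :
    Module.End ℂ (Matrix (Fin n → Fin 2) (Fin n → Fin 2) ℂ) :=
  ((1 - (1 - Real.exp (-2 * lam)) / 2 : ℝ) : ℂ) • LinearMap.id +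
    (((1 - Real.exp (-2 * lam)) / 2 : ℝ) : ℂ) •
      ((LinearMap.mulLeft ℂ (PauliOp f)).comp (LinearMap.mulRight ℂ (PauliOp f)))

lemma sg_of_ne (x : ZMod 2) (h : x ≠ 0) : sg x = -1 := by
  rcases zmod2_cases x with h' | h'
  · exact absurd h' h
  · subst h'; norm_num [sg]

lemma GammaL_apply_pauli {n : ℕ} (p : Fin n → Fin 4) (l : ℝ) (g : Fin n → Fin 4) :
    GammaL p l (PauliOp g)
      = (((if chi g p = 0 then (1 : ℝ) else Real.exp (-2 * l)) : ℝ) : ℂ) • PauliOp g := by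
  simp only [GammaL, LinearMap.add_apply, LinearMap.smul_apply, LinearMap.id_apply,
    LinearMap.comp_apply, LinearMap.mulLeft_apply, LinearMap.mulRight_apply]
  rw [← mul_assoc, PauliOp_conj g p, smul_smul, ← add_smul]
  congr 1
  by_cases h : chi g p = 0
  · rw [h, sg_zero]
    simp [h]
  · rw [sg_of_ne _ h]
    simp only [h, if_false]
    push_cast
    ring

lemma noncommProd_eig {M ι : Type*} [AddCommMonoid M] [Module ℂ M] (s : Finset ι)
    (Γ : ι → Module.End ℂ M) (h) (B : M) (c : ι → ℂ)
    (hc : ∀ i ∈ s, Γ i B = c i • B) :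
    s.noncommProd Γ h B = (∏ i ∈ s, c i) • B := by
  induction s using Finset.cons_induction with
  | empty => simp
  | cons a t ha ih =>
      rw [Finset.noncommProd_cons, Finset.prod_cons]
      have ht : (t : Set ι).Pairwise fun i j => Commute (Γ i) (Γ j) := by
        refine Set.Pairwise.mono ?_ h
        simp [Finset.coe_cons, Set.subset_insert]
      calc (Γ a * t.noncommProd Γ ht) B = Γ a (t.noncommProd Γ ht B) := rfl
        _ = Γ a ((∏ i ∈ t, c i) • B) := by
              rw [ih ht fun i hi => hc i (Finset.mem_cons_of_mem hi)]
        _ = (∏ i ∈ t, c i) • Γ a B := map_smul _ _ _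
        _ = (c a * ∏ i ∈ t, c i) • B := by
              rw [hc a (Finset.mem_cons_self a t), smul_smul, mul_comm]

lemma chi_xor {n : ℕ} (w g p : Fin n → Fin 4) :
    chi (fun k => xor4 (w k) (g k)) p = chi w p + chi g p := by
  unfold chi
  rw [← Finset.sum_add_distrib]
  exact Finset.sum_congr rfl fun k _ => by
    rw [sym_comm, sym_xor, sym_comm (p k) (w k), sym_comm (p k) (g k)]

lemma nonneg_sum_sg {n : ℕ} (φ : (Fin n → Fin 4) → ZMod 2)
    (hadd : ∀ w g, φ (fun k => xor4 (w k) (g k)) = φ w + φ g) :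
    0 ≤ ∑ g : Fin n → Fin 4, sg (φ g) := by
  by_cases hw : ∃ w, φ w = 1
  · obtain ⟨w, hw⟩ := hw
    have hinv : Function.Involutive (fun g : Fin n → Fin 4 => fun k => xor4 (w k) (g k)) :=
      fun g => funext fun k => xor4_invol _ _
    have hsum := Equiv.sum_comp hinv.toPerm (fun g => sg (φ g))
    have h2 : ∑ g : Fin n → Fin 4, sg (φ g) = -∑ g : Fin n → Fin 4, sg (φ g) := by
      conv_lhs => rw [← hsum]
      rw [← Finset.sum_neg_distrib]
      refine Finset.sum_congr rfl fun g _ => ?_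
      show sg (φ fun k => xor4 (w k) (g k)) = _
      rw [hadd, hw, sg_add, sg_one]
      ring
    linarith
  · push_neg at hw
    have h0 : ∀ g, φ g = 0 := fun g => (zmod2_cases (φ g)).resolve_right (hw g)
    simp only [h0, sg_zero]
    positivity

lemma key_ineq {n : ℕ} {ι : Type*} (s : Finset ι) (f : ι → (Fin n → Fin 4)) (lam : ι → ℝ)
    (hlam : ∀ i ∈ s, 0 ≤ lam i) :
    (∏ i ∈ s, (1 + Real.exp (-2 * lam i)) / 2) * (4 : ℝ) ^ n
      ≤ ∑ g : Fin n → Fin 4, ∏ i ∈ s,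
          (if chi g (f i) = 0 then (1 : ℝ) else Real.exp (-2 * lam i)) := by
  classical
  have hec : ∀ i g, (if chi g (f i) = 0 then (1:ℝ) else Real.exp (-2 * lam i))
      = ((1 - Real.exp (-2 * lam i)) / 2) * sg (chi g (f i))
        + (1 + Real.exp (-2 * lam i)) / 2 := by
    intro i g
    by_cases h : chi g (f i) = 0
    · rw [if_pos h, h, sg_zero]; ring
    · rw [if_neg h, sg_of_ne _ h]; ring
  have step1 : ∀ g, ∏ i ∈ s, (if chi g (f i) = 0 then (1:ℝ) else Real.exp (-2 * lam i))
      = ∑ S ∈ s.powerset,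
          ((∏ i ∈ S, (1 - Real.exp (-2 * lam i)) / 2) * sg (∑ i ∈ S, chi g (f i)))
            * ∏ i ∈ s \ S, (1 + Real.exp (-2 * lam i)) / 2 := by
    intro g
    rw [Finset.prod_congr rfl (fun i _ => hec i g), Finset.prod_add]
    refine Finset.sum_congr rfl fun S hS => ?_
    rw [Finset.prod_mul_distrib, sg_sum]
  rw [Finset.sum_congr rfl (fun g _ => step1 g), Finset.sum_comm]
  have step2 : ∀ S ∈ s.powerset,
      (∑ g : Fin n → Fin 4,
        ((∏ i ∈ S, (1 - Real.exp (-2 * lam i)) / 2) * sg (∑ i ∈ S, chi g (f i)))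
          * ∏ i ∈ s \ S, (1 + Real.exp (-2 * lam i)) / 2)
      = ((∏ i ∈ S, (1 - Real.exp (-2 * lam i)) / 2)
          * ∏ i ∈ s \ S, (1 + Real.exp (-2 * lam i)) / 2)
        * ∑ g : Fin n → Fin 4, sg (∑ i ∈ S, chi g (f i)) := by
    intro S _
    rw [Finset.mul_sum]
    exact Finset.sum_congr rfl fun g _ => by ring
  rw [Finset.sum_congr rfl step2]
  have hnonneg : ∀ S ∈ s.powerset,
      0 ≤ ((∏ i ∈ S, (1 - Real.exp (-2 * lam i)) / 2)
          * ∏ i ∈ s \ S, (1 + Real.exp (-2 * lam i)) / 2)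
        * ∑ g : Fin n → Fin 4, sg (∑ i ∈ S, chi g (f i)) := by
    intro S hS
    have hS' := Finset.mem_powerset.mp hS
    refine mul_nonneg (mul_nonneg ?_ ?_) ?_
    · refine Finset.prod_nonneg fun i hi => ?_
      have h1 : Real.exp (-2 * lam i) ≤ 1 := by
        rw [Real.exp_le_one_iff]
        have := hlam i (hS' hi)
        linarith
      linarith
    · refine Finset.prod_nonneg fun i _ => ?_
      have := Real.exp_nonneg (-2 * lam i)
      linarith
    · refine nonneg_sum_sg _ fun w g => ?_
      rw [← Finset.sum_add_distrib]
      exact Finset.sum_congr rfl fun i _ => chi_xor w g (f i)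
  have hmem : ∅ ∈ s.powerset := Finset.empty_mem_powerset s
  have := Finset.single_le_sum hnonneg hmem
  refine le_trans (le_of_eq ?_) this
  simp only [Finset.prod_empty, Finset.sum_empty, Finset.sdiff_empty, sg_zero, one_mul]
  rw [Finset.sum_const, Finset.card_univ, Fintype.card_fun, Fintype.card_fin,
    Fintype.card_fin, nsmul_eq_mul]
  push_cast
  ring_nf

/-- The identity-identity coefficient `c_{I,I}` of the Pauli-basis expansion
`Λ(ρ) = ∑_{P,Q} c_{P,Q} P ρ Q`, extracted as `d^{-3} ∑_B Tr(B Λ(B))` over the Pauli basis,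
which equals the process fidelity of `Λ` with the identity channel. -/
def cII {n : ℕ}
    (Lam : Matrix (Fin n → Fin 2) (Fin n → Fin 2) ℂ →
      Matrix (Fin n → Fin 2) (Fin n → Fin 2) ℂ) : ℂ :=
  ((2 ^ n : ℂ) ^ 3)⁻¹ * ∑ f : Fin n → Fin 4, (PauliOp f * Lam (PauliOp f)).trace

/-- Lemma 1: for `Λ = ∏_P Γ_P^{λ_P}` over distinct nontrivial Paulis,
`c_{I,I} ≥ ∏_P (1+e^{-2λ_P})/2 ≥ exp(-∑_P λ_P)`. -/
theorem cII_lower_bound {n : ℕ} {ι : Type*} (s : Finset ι)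
    (f : ι → (Fin n → Fin 4)) (lam : ι → ℝ)
    (hinj : Set.InjOn f s) (hnontriv : ∀ i ∈ s, f i ≠ fun _ => 0)
    (hlam : ∀ i ∈ s, 0 ≤ lam i)
    (hcomm : (s : Set ι).Pairwise fun i j => Commute (GammaL (f i) (lam i)) (GammaL (f j) (lam j))) :
    (cII fun ρ => (s.noncommProd (fun i => GammaL (f i) (lam i)) hcomm) ρ).re
        ≥ ∏ i ∈ s, (1 + Real.exp (-2 * lam i)) / 2 ∧
      (cII fun ρ => (s.noncommProd (fun i => GammaL (f i) (lam i)) hcomm) ρ).re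
        ≥ Real.exp (-∑ i ∈ s, lam i) := by
  classical
  set E : (Fin n → Fin 4) → ℝ :=
    fun g => ∏ i ∈ s, (if chi g (f i) = 0 then (1:ℝ) else Real.exp (-2 * lam i)) with hE
  have hL : ∀ g : Fin n → Fin 4,
      (s.noncommProd (fun i => GammaL (f i) (lam i)) hcomm) (PauliOp g)
        = ((E g : ℝ) : ℂ) • PauliOp g := by
    intro g
    rw [noncommProd_eig s _ hcomm (PauliOp g)
      (fun i => (((if chi g (f i) = 0 then (1:ℝ) else Real.exp (-2 * lam i)) : ℝ) : ℂ))
      (fun i _ => GammaL_apply_pauli (f i) (lam i) g), hE, Complex.ofReal_prod]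
  have h2n : (2 ^ n : ℂ) ≠ 0 := pow_ne_zero n two_ne_zero
  have hcII : (cII fun ρ => (s.noncommProd (fun i => GammaL (f i) (lam i)) hcomm) ρ)
      = (((((2:ℝ) ^ n) ^ 2)⁻¹ * ∑ g : Fin n → Fin 4, E g : ℝ) : ℂ) := by
    unfold cII
    have htr : ∀ g : Fin n → Fin 4,
        (PauliOp g * ((s.noncommProd (fun i => GammaL (f i) (lam i)) hcomm) (PauliOp g))).trace
          = ((E g : ℝ) : ℂ) * 2 ^ n := by
      intro g
      rw [hL g, Matrix.mul_smul, Matrix.trace_smul, PauliOp_trace_self, smul_eq_mul]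
    rw [Finset.sum_congr rfl fun g _ => htr g, ← Finset.sum_mul]
    push_cast
    field_simp
  rw [hcII, Complex.ofReal_re]
  have h4 : (0:ℝ) < 4 ^ n := by positivity
  have h24 : ((2:ℝ) ^ n) ^ 2 = 4 ^ n := by
    rw [← pow_mul, mul_comm, pow_mul]
    norm_num
  have hkey := key_ineq s f lam hlam
  have h1 : (((2:ℝ) ^ n) ^ 2)⁻¹ * ∑ g : Fin n → Fin 4, E g
      ≥ ∏ i ∈ s, (1 + Real.exp (-2 * lam i)) / 2 := by
    rw [h24, ge_iff_le, le_inv_mul_iff₀ h4]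
    calc (4:ℝ) ^ n * ∏ i ∈ s, (1 + Real.exp (-2 * lam i)) / 2
        = (∏ i ∈ s, (1 + Real.exp (-2 * lam i)) / 2) * 4 ^ n := by ring
      _ ≤ ∑ g : Fin n → Fin 4, E g := hkey
  refine ⟨h1, le_trans ?_ h1⟩
  rw [← Finset.sum_neg_distrib, Real.exp_sum]
  refine Finset.prod_le_prod (fun i _ => (Real.exp_pos _).le) fun i _ => ?_
  have h := Real.exp_pos (-lam i)
  have hsq : Real.exp (-2 * lam i) = Real.exp (-lam i) * Real.exp (-lam i) := by
    rw [← Real.exp_add]; ring_nf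
  nlinarith [sq_nonneg (Real.exp (-lam i) - 1)]
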